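/- Fix an integer n ≥ 2 and consider tropical polynomials of degree 2n with coefficient sequence c₀,…,c_{2n} satisfying c₀ = cₙ = c_{2n} = 0 and c_i > 0 for all i ∉ {0, n, 2n} (the equal slope and degree concave case). The set of coefficient vectors (c_i)_{i ∈ {1,…,2n−1} \ {n}} ∈ (0,∞)^{2n−2} for which the corresponding tropical polynomial factors as a product of two tropical polynomials of degree n — i.e. for which there exist a, b : {0,…,n} → ℝ whose min-plus convolution equals (c₀,…,c_{2n}) — has Lebesgue measure zero in ℝ^{2n−2}. -/
import Mathlib


/-- Min-plus (tropical) convolution of a sequence `a` supported on `{0,…,m}` with a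
sequence `b` supported on `{0,…,k}`: `c j = min_i (a i + b (j - i))`. -/
noncomputable def tropConv (m k : ℕ) (a b : ℕ → ℝ) (j : ℕ) : ℝ :=
  sInf {x : ℝ | ∃ i : ℕ, i ≤ m ∧ i ≤ j ∧ j - i ≤ k ∧ x = a i + b (j - i)}

/-- The coefficient sequence `c₀, …, c_{2n}` of an "equal slope and degree concave"
tropical polynomial determined by the vector `v` of its free coefficients:
`c 0 = c n = c (2n) = 0`, and the coefficients in the remaining `2n - 2` degrees
`{1,…,2n-1} \ {n}` are the entries of `v` (degree `i < n` corresponds to index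
`i - 1`, degree `i > n` to index `i - 2`). -/
def coeffOf (n : ℕ) (v : Fin (2 * n - 2) → ℝ) : ℕ → ℝ := fun i =>
  if i = 0 ∨ i = n ∨ i = 2 * n then 0
  else if h : i - 1 < 2 * n - 2 ∧ i < n then v ⟨i - 1, h.1⟩
  else if h : i - 2 < 2 * n - 2 then v ⟨i - 2, h⟩
  else 0

lemma tropConv_finite (m k : ℕ) (a b : ℕ → ℝ) (j : ℕ) :
    {x : ℝ | ∃ i : ℕ, i ≤ m ∧ i ≤ j ∧ j - i ≤ k ∧ x = a i + b (j - i)}.Finite :=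
  Set.Finite.subset ((Set.finite_Iic m).image (fun i => a i + b (j - i)))
    (by rintro x ⟨i, h1, _, _, rfl⟩; exact ⟨i, h1, rfl⟩)

lemma tropConv_le (m k : ℕ) (a b : ℕ → ℝ) (i j : ℕ) (h1 : i ≤ m) (h2 : i ≤ j)
    (h3 : j - i ≤ k) : tropConv m k a b j ≤ a i + b (j - i) :=
  csInf_le (tropConv_finite m k a b j).bddBelow ⟨i, h1, h2, h3, rfl⟩

lemma le_tropConv (m k : ℕ) (a b : ℕ → ℝ) (j : ℕ) (hj : j ≤ m + k) (x : ℝ)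
    (h : ∀ i, i ≤ m → i ≤ j → j - i ≤ k → x ≤ a i + b (j - i)) :
    x ≤ tropConv m k a b j := by
  apply le_csInf
  · rcases le_total m j with hmj | hmj
    · exact ⟨a m + b (j - m), m, le_rfl, hmj, by omega, rfl⟩
    · exact ⟨a j + b (j - j), j, hmj, le_rfl, by omega, rfl⟩
  · rintro y ⟨i, h1, h2, h3, rfl⟩
    exact h i h1 h2 h3

lemma coeffOf_low (n : ℕ) (hn : 2 ≤ n) (v : Fin (2 * n - 2) → ℝ) {i : ℕ}
    (h1 : 1 ≤ i) (h2 : i < n) : coeffOf n v i = v ⟨i - 1, by omega⟩ := by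
  unfold coeffOf
  rw [if_neg (by omega), dif_pos ⟨by omega, h2⟩]

lemma coeffOf_high (n : ℕ) (hn : 2 ≤ n) (v : Fin (2 * n - 2) → ℝ) {i : ℕ}
    (h1 : n < i) (h2 : i < 2 * n) : coeffOf n v i = v ⟨i - 2, by omega⟩ := by
  unfold coeffOf
  rw [if_neg (by omega), dif_neg (by omega), dif_pos (by omega)]

/-- In the equal slope and degree concave case, the set of coefficient vectors in
`(0,∞)^{2n-2}` whose tropical polynomial factors as a product of two tropical
polynomials of degree `n` has Lebesgue measure zero. -/
theorem factorable_measure_zero (n : ℕ) (hn : 2 ≤ n) :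
    MeasureTheory.volume
      {v : Fin (2 * n - 2) → ℝ | (∀ i, 0 < v i) ∧
        ∃ a b : ℕ → ℝ, ∀ j ≤ 2 * n, tropConv n n a b j = coeffOf n v j} = 0 := by
  have hsub : {v : Fin (2 * n - 2) → ℝ | (∀ i, 0 < v i) ∧
        ∃ a b : ℕ → ℝ, ∀ j ≤ 2 * n, tropConv n n a b j = coeffOf n v j} ⊆
      ⋃ p : Fin (2 * n - 2) × Fin (2 * n - 2), {v | p.1 ≠ p.2 ∧ v p.1 = v p.2} := by
    rintro v ⟨hv, a, b, hab⟩
    -- a 0 + b 0 = 0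
    have h00 : a 0 + b 0 = 0 := by
      have hab0 := hab 0 (by omega)
      have hset : {x : ℝ | ∃ i : ℕ, i ≤ n ∧ i ≤ 0 ∧ 0 - i ≤ n ∧ x = a i + b (0 - i)}
          = {a 0 + b 0} := by
        ext x
        simp only [Set.mem_setOf_eq, Set.mem_singleton_iff]
        constructor
        · rintro ⟨i, hi1, hi2, hi3, rfl⟩
          obtain rfl : i = 0 := by omega
          rfl
        · rintro rfl
          exact ⟨0, by omega, le_refl 0, by omega, rfl⟩
      have heq : tropConv n n a b 0 = a 0 + b 0 := by
        unfold tropConv; rw [hset]; exact csInf_singleton _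
      rw [heq] at hab0
      simpa [coeffOf] using hab0
    -- a n + b n = 0
    have hnn : a n + b n = 0 := by
      have hab2 := hab (2 * n) le_rfl
      have hset : {x : ℝ | ∃ i : ℕ, i ≤ n ∧ i ≤ 2 * n ∧ 2 * n - i ≤ n ∧ x = a i + b (2 * n - i)}
          = {a n + b n} := by
        ext x
        simp only [Set.mem_setOf_eq, Set.mem_singleton_iff]
        constructor
        · rintro ⟨i, hi1, hi2, hi3, rfl⟩
          have hi : i = n := by omega
          rw [hi, show 2 * n - n = n from by omega]
        · rintro rfl
          exact ⟨n, le_rfl, by omega, by omega, by rw [show 2 * n - n = n from by omega]⟩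
      have heq : tropConv n n a b (2 * n) = a n + b n := by
        unfold tropConv; rw [hset]; exact csInf_singleton _
      rw [heq] at hab2
      simpa [coeffOf] using hab2
    have hcn : coeffOf n v n = 0 := by simp [coeffOf]
    have hbn0 : (0 : ℝ) ≤ a n + b 0 := by
      have h := tropConv_le n n a b n n le_rfl le_rfl (by omega)
      rw [Nat.sub_self, hab n (by omega), hcn] at h
      exact h
    have han0 : (0 : ℝ) ≤ a 0 + b n := by
      have h := tropConv_le n n a b 0 n (by omega) (by omega) (by omega)
      rw [Nat.sub_zero, hab n (by omega), hcn] at h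
      exact h
    have han : a n = a 0 := by linarith
    have hbn : b n = b 0 := by linarith
    set d : ℕ → ℝ := fun i => min (a i + b 0) (a 0 + b i) with hd
    have hdl : ∀ i, d i ≤ a i + b 0 := fun i => min_le_left _ _
    have hdr : ∀ i, d i ≤ a 0 + b i := fun i => min_le_right _ _
    have hcd : ∀ i, 1 ≤ i → i ≤ n - 1 →
        coeffOf n v i ≤ d i ∧ coeffOf n v (n + i) ≤ d i := by
      intro i hi1 hi2
      have e1 : tropConv n n a b i ≤ a i + b 0 := by
        have h := tropConv_le n n a b i i (by omega) le_rfl (by omega)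
        rwa [Nat.sub_self] at h
      have e2 : tropConv n n a b i ≤ a 0 + b i := by
        have h := tropConv_le n n a b 0 i (by omega) (by omega) (by omega)
        rwa [Nat.sub_zero] at h
      have e3 : tropConv n n a b (n + i) ≤ a i + b 0 := by
        have h := tropConv_le n n a b i (n + i) (by omega) (by omega) (by omega)
        rw [show n + i - i = n from by omega, hbn] at h
        exact h
      have e4 : tropConv n n a b (n + i) ≤ a 0 + b i := by
        have h := tropConv_le n n a b n (n + i) le_rfl (by omega) (by omega)
        rw [show n + i - n = i from by omega, han] at h
        exact h
      rw [hab i (by omega)] at e1 e2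
      rw [hab (n + i) (by omega)] at e3 e4
      exact ⟨le_min e1 e2, le_min e3 e4⟩
    have hdpos : ∀ i, 1 ≤ i → i ≤ n - 1 → 0 < d i := by
      intro i h1 h2
      have h := (hcd i h1 h2).1
      rw [coeffOf_low n hn v h1 (by omega)] at h
      exact lt_of_lt_of_le (hv _) h
    obtain ⟨i0, hi0mem, hi0min⟩ := Finset.exists_min_image (Finset.Icc 1 (n - 1)) d
      ⟨1, Finset.mem_Icc.mpr ⟨le_rfl, by omega⟩⟩
    rw [Finset.mem_Icc] at hi0mem
    have hμpos : 0 < d i0 := hdpos i0 hi0mem.1 hi0mem.2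
    have hdge : ∀ k, 1 ≤ k → k ≤ n - 1 → d i0 ≤ d k := fun k h1 h2 =>
      hi0min k (Finset.mem_Icc.mpr ⟨h1, h2⟩)
    have hterm : ∀ i j, 1 ≤ i → i ≤ n - 1 → 1 ≤ j → j ≤ n - 1 → d i0 ≤ a i + b j := by
      intro i j hi1 hi2 hj1 hj2
      have h1 := hdge i hi1 hi2
      have h2 := hdge j hj1 hj2
      have h3 := hdl i
      have h4 := hdr j
      linarith
    have hlow : d i0 ≤ tropConv n n a b i0 := by
      apply le_tropConv n n a b i0 (by omega)
      intro k hk1 hk2 hk3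
      rcases Nat.eq_zero_or_pos k with rfl | hkpos
      · rw [Nat.sub_zero]; exact hdr i0
      · by_cases hki : k = i0
        · subst hki; rw [Nat.sub_self]; exact hdl k
        · exact hterm k (i0 - k) hkpos (by omega) (by omega) (by omega)
    have hhigh : d i0 ≤ tropConv n n a b (n + i0) := by
      apply le_tropConv n n a b (n + i0) (by omega)
      intro k hk1 hk2 hk3
      have hki0 : i0 ≤ k := by omega
      by_cases hkeq : k = i0
      · subst hkeq
        rw [show n + k - k = n from by omega, hbn]
        exact hdl k
      · by_cases hkn : k = n
        · subst hkn
          rw [show k + i0 - k = i0 from by omega, han]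
          exact hdr i0
        · exact hterm k (n + i0 - k) (by omega) (by omega) (by omega) (by omega)
    rw [hab i0 (by omega), coeffOf_low n hn v hi0mem.1 (by omega)] at hlow
    rw [hab (n + i0) (by omega), coeffOf_high n hn v (by omega) (by omega)] at hhigh
    have hup1 : v ⟨i0 - 1, by omega⟩ ≤ d i0 := by
      have h := (hcd i0 hi0mem.1 hi0mem.2).1
      rwa [coeffOf_low n hn v hi0mem.1 (by omega)] at h
    have hup2 : v ⟨n + i0 - 2, by omega⟩ ≤ d i0 := by
      have h := (hcd i0 hi0mem.1 hi0mem.2).2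
      rwa [coeffOf_high n hn v (by omega) (by omega)] at h
    refine Set.mem_iUnion.mpr ⟨(⟨i0 - 1, by omega⟩, ⟨n + i0 - 2, by omega⟩), ?_, ?_⟩
    · simp only [ne_eq, Prod.mk.injEq, Fin.mk.injEq]
      omega
    · exact le_antisymm (le_trans hup1 hhigh) (le_trans hup2 hlow)
  refine MeasureTheory.measure_mono_null hsub (MeasureTheory.measure_iUnion_null fun p => ?_)
  by_cases hp : p.1 = p.2
  · have he : {v : Fin (2 * n - 2) → ℝ | p.1 ≠ p.2 ∧ v p.1 = v p.2} = ∅ := by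
      ext v; simp [hp]
    rw [he]
    exact MeasureTheory.measure_empty
  · refine MeasureTheory.measure_mono_null (fun v hv => ?_)
      (MeasureTheory.Measure.addHaar_submodule (μ := MeasureTheory.volume)
        (LinearMap.ker ((LinearMap.proj p.1 : (Fin (2 * n - 2) → ℝ) →ₗ[ℝ] ℝ)
          - LinearMap.proj p.2)) ?_)
    · simpa [LinearMap.mem_ker, sub_eq_zero] using hv.2
    · intro htop
      have h1 : Pi.single p.1 (1 : ℝ) ∈
          LinearMap.ker ((LinearMap.proj p.1 : (Fin (2 * n - 2) → ℝ) →ₗ[ℝ] ℝ)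
            - LinearMap.proj p.2) := htop ▸ Submodule.mem_top
      have h2 := LinearMap.mem_ker.mp h1
      rw [LinearMap.sub_apply, LinearMap.proj_apply, LinearMap.proj_apply,
        Pi.single_eq_same, Pi.single_eq_of_ne (Ne.symm hp)] at h2
      norm_num at h2
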